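/- arXiv:1312.6502 — 5 statements merged into one kernel-verified Lean document; each statement's English description precedes it below -/
import Mathlib

section
/- Let R be a linear manifold (linear subspace, not necessarily closed) of H. Then the following are equivalent: (i) there exists an orthogonal projection P on H such that ran P ∩ R = {0} and ran(I − P) ∩ R = {0}; (ii) there exists a fundamental symmetry J on H (a bounded operator with J = J* = J⁻¹) such that J(R) ∩ R = {0}. Moreover, the correspondence is given by J = 2P − I and P = (I + J)/2. -/
private lemma auxPJ {H : Type*} [NormedAddCommGroup H] [InnerProductSpace ℂ H]
    [CompleteSpace H] (R : Submodule ℂ H) (P : H →L[ℂ] H)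
    (hP : IsSelfAdjoint P) (hP2 : P * P = P)
    (h1 : LinearMap.range (P : H →ₗ[ℂ] H) ⊓ R = ⊥)
    (h2 : LinearMap.range ((1 - P : H →L[ℂ] H) : H →ₗ[ℂ] H) ⊓ R = ⊥) :
    IsSelfAdjoint ((2 : ℂ) • P - 1) ∧
      ((2 : ℂ) • P - 1) * ((2 : ℂ) • P - 1) = 1 ∧
      R.map (((2 : ℂ) • P - 1 : H →L[ℂ] H) : H →ₗ[ℂ] H) ⊓ R = ⊥ := by
  refine ⟨?_, ?_, ?_⟩
  · simp [IsSelfAdjoint, star_sub, star_smul, hP.star_eq]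
  · rw [mul_sub, sub_mul, sub_mul, mul_one, one_mul, smul_mul_assoc, mul_smul_comm,
      smul_smul, hP2]
    simp only [one_mul, mul_one]
    module
  · rw [Submodule.eq_bot_iff]
    rintro x ⟨hx1, hx2⟩
    obtain ⟨y, hyR, hyx⟩ := hx1
    have happ : ((2:ℂ) • P - 1) y = (2:ℂ) • P y - y := by simp
    have key1 : x + y = P ((2:ℂ) • y) := by
      rw [← hyx, ContinuousLinearMap.coe_coe, happ, map_smul]; abel
    have key2 : y - x = (1 - P) ((2:ℂ) • y) := by
      rw [← hyx, ContinuousLinearMap.coe_coe, happ]; simp [map_smul]; module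
    have m1 : x + y ∈ LinearMap.range (P : H →ₗ[ℂ] H) ⊓ R :=
      ⟨⟨(2:ℂ) • y, key1.symm⟩, R.add_mem hx2 hyR⟩
    have m2 : y - x ∈ LinearMap.range ((1 - P : H →L[ℂ] H) : H →ₗ[ℂ] H) ⊓ R :=
      ⟨⟨(2:ℂ) • y, key2.symm⟩, R.sub_mem hyR hx2⟩
    rw [h1] at m1; rw [h2] at m2
    have e1 : x + y = 0 := m1
    have e2 : y - x = 0 := m2
    have hyx2 : y = x := by rwa [sub_eq_zero] at e2
    rw [hyx2] at e1
    have h2x : (2:ℂ) • x = 0 := by rw [two_smul]; exact e1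
    simpa using congrArg (fun z => (2:ℂ)⁻¹ • z) h2x

private lemma auxJP {H : Type*} [NormedAddCommGroup H] [InnerProductSpace ℂ H]
    [CompleteSpace H] (R : Submodule ℂ H) (J : H →L[ℂ] H)
    (hJ : IsSelfAdjoint J) (hJ2 : J * J = 1) (h : R.map (J : H →ₗ[ℂ] H) ⊓ R = ⊥) :
    IsSelfAdjoint ((2 : ℂ)⁻¹ • (1 + J)) ∧
      ((2 : ℂ)⁻¹ • (1 + J)) * ((2 : ℂ)⁻¹ • (1 + J)) = (2 : ℂ)⁻¹ • (1 + J) ∧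
      LinearMap.range (((2 : ℂ)⁻¹ • (1 + J) : H →L[ℂ] H) : H →ₗ[ℂ] H) ⊓ R = ⊥ ∧
      LinearMap.range ((1 - (2 : ℂ)⁻¹ • (1 + J) : H →L[ℂ] H) : H →ₗ[ℂ] H) ⊓ R = ⊥ := by
  have hJP : J * ((2 : ℂ)⁻¹ • (1 + J)) = (2 : ℂ)⁻¹ • (1 + J) := by
    rw [mul_smul_comm, mul_add, hJ2, mul_one]; module
  refine ⟨?_, ?_, ?_, ?_⟩
  · simp [IsSelfAdjoint, star_add, star_smul, hJ.star_eq]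
  · rw [smul_mul_assoc, mul_smul_comm, smul_smul, add_mul, mul_add, mul_add, one_mul,
      mul_one, hJ2]
    simp only [one_mul, mul_one]
    module
  · rw [Submodule.eq_bot_iff]
    rintro x ⟨⟨y, hy⟩, hxR⟩
    have hfix : J x = x := by
      rw [← hy, ContinuousLinearMap.coe_coe, ← ContinuousLinearMap.comp_apply, ← ContinuousLinearMap.mul_def, hJP]
    have : x ∈ R.map (J : H →ₗ[ℂ] H) ⊓ R := ⟨⟨x, hxR, hfix⟩, hxR⟩
    rw [h] at this; exact this
  · rw [Submodule.eq_bot_iff]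
    rintro x ⟨⟨y, hy⟩, hxR⟩
    have hQJ : J * (1 - (2 : ℂ)⁻¹ • (1 + J)) = -(1 - (2 : ℂ)⁻¹ • (1 + J)) := by
      rw [mul_sub, mul_one, hJP]; module
    have hflip : J x = -x := by
      rw [← hy, ContinuousLinearMap.coe_coe, ← ContinuousLinearMap.comp_apply, ← ContinuousLinearMap.mul_def, hQJ]
      simp
    have hJx : J (-x) = x := by rw [map_neg, hflip, neg_neg]
    have : x ∈ R.map (J : H →ₗ[ℂ] H) ⊓ R := ⟨⟨-x, R.neg_mem hxR, hJx⟩, hxR⟩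
    rw [h] at this; exact this

/-- Around the Van Daele–Schmüdgen theorem, Proposition 3.1:
for a linear manifold `R` in a Hilbert space `H`, the existence of an orthogonal
projection `P` with `ran P ∩ R = {0}` and `ran (I - P) ∩ R = {0}` is equivalent to the
existence of a fundamental symmetry `J` with `J(R) ∩ R = {0}`; the correspondence is
`J = 2P - I` and `P = (I + J)/2`. -/
theorem stmt_0
    {H : Type*} [NormedAddCommGroup H] [InnerProductSpace ℂ H] [CompleteSpace H]
    [TopologicalSpace.SeparableSpace H] (hinf : ¬ FiniteDimensional ℂ H)
    (R : Submodule ℂ H) :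
    ((∃ P : H →L[ℂ] H, IsSelfAdjoint P ∧ P * P = P ∧
        LinearMap.range (P : H →ₗ[ℂ] H) ⊓ R = ⊥ ∧ LinearMap.range ((1 - P : H →L[ℂ] H) : H →ₗ[ℂ] H) ⊓ R = ⊥) ↔
      (∃ J : H →L[ℂ] H, IsSelfAdjoint J ∧ J * J = 1 ∧ R.map (J : H →ₗ[ℂ] H) ⊓ R = ⊥)) ∧
    (∀ P : H →L[ℂ] H, IsSelfAdjoint P → P * P = P →
        LinearMap.range (P : H →ₗ[ℂ] H) ⊓ R = ⊥ → LinearMap.range ((1 - P : H →L[ℂ] H) : H →ₗ[ℂ] H) ⊓ R = ⊥ →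
        IsSelfAdjoint ((2 : ℂ) • P - 1) ∧
          ((2 : ℂ) • P - 1) * ((2 : ℂ) • P - 1) = 1 ∧
          R.map (((2 : ℂ) • P - 1 : H →L[ℂ] H) : H →ₗ[ℂ] H) ⊓ R = ⊥) ∧
    (∀ J : H →L[ℂ] H, IsSelfAdjoint J → J * J = 1 → R.map (J : H →ₗ[ℂ] H) ⊓ R = ⊥ →
        IsSelfAdjoint ((2 : ℂ)⁻¹ • (1 + J)) ∧
          ((2 : ℂ)⁻¹ • (1 + J)) * ((2 : ℂ)⁻¹ • (1 + J)) = (2 : ℂ)⁻¹ • (1 + J) ∧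
          LinearMap.range (((2 : ℂ)⁻¹ • (1 + J) : H →L[ℂ] H) : H →ₗ[ℂ] H) ⊓ R = ⊥ ∧
          LinearMap.range ((1 - (2 : ℂ)⁻¹ • (1 + J) : H →L[ℂ] H) : H →ₗ[ℂ] H) ⊓ R = ⊥) := by
  refine ⟨⟨?_, ?_⟩, fun P hP hP2 h1 h2 => auxPJ R P hP hP2 h1 h2,
    fun J hJ hJ2 h => auxJP R J hJ hJ2 h⟩
  · rintro ⟨P, hP, hP2, h1, h2⟩
    obtain ⟨a, b, c⟩ := auxPJ R P hP hP2 h1 h2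
    exact ⟨(2:ℂ) • P - 1, a, b, c⟩
  · rintro ⟨J, hJ, hJ2, h⟩
    obtain ⟨a, b, c, d⟩ := auxJP R J hJ hJ2 h
    exact ⟨(2:ℂ)⁻¹ • (1 + J), a, b, c, d⟩
end

section
/- Let A ∈ B₀⁺(H) with ran A ≠ H, let M be a closed subspace of H, set A₁ := A^{1/2} P_M A^{1/2}, and assume ker A₁ = {0}. Then for all u, v ∈ H with A₁^{1/2} u = A^{1/2} v one has ‖u‖ = ‖v‖; that is, ‖A₁^{-1/2} h‖ = ‖A^{-1/2} h‖ for every h ∈ ran A₁^{1/2}. -/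
open scoped InnerProductSpace

/-- Proposition 3.2 (1)(b), equation (3.1): for `A ∈ B₀⁺(H)` with `ran A ≠ H`, a closed
subspace `M` with orthogonal projection `P`, and `A₁ := A^{1/2} P A^{1/2}` with
`ker A₁ = {0}`, one has `‖A₁^{-1/2} h‖ = ‖A^{-1/2} h‖` for every `h ∈ ran A₁^{1/2}`;
i.e. whenever `A₁^{1/2} u = A^{1/2} v` then `‖u‖ = ‖v‖`. -/
theorem stmt_2
    {H : Type*} [NormedAddCommGroup H] [InnerProductSpace ℂ H] [CompleteSpace H]
    [TopologicalSpace.SeparableSpace H] (hinf : ¬ FiniteDimensional ℂ H)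
    (A sqrtA sqrtA1 : H →L[ℂ] H)
    (hA : A.IsPositive) (hAker : LinearMap.ker (A : H →ₗ[ℂ] H) = ⊥) (hAran : LinearMap.range (A : H →ₗ[ℂ] H) ≠ ⊤)
    (hsqrtA : sqrtA.IsPositive) (hsqrtA2 : sqrtA * sqrtA = A)
    (M : Submodule ℂ H) (hMc : IsClosed (M : Set H))
    (P : H →L[ℂ] H) (hP : IsSelfAdjoint P) (hPidem : P * P = P)
    (hPran : LinearMap.range (P : H →ₗ[ℂ] H) = M)
    (hsqrtA1 : sqrtA1.IsPositive) (hsqrtA12 : sqrtA1 * sqrtA1 = sqrtA * P * sqrtA)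
    (hker : LinearMap.ker ((sqrtA * P * sqrtA : H →L[ℂ] H) : H →ₗ[ℂ] H) = ⊥) :
    ∀ u v : H, sqrtA1 u = sqrtA v → ‖u‖ = ‖v‖ := by
  intro u v huv
  set S := sqrtA with hS
  set B := sqrtA1 with hB
  -- symmetry of the operators
  have hSsym : ∀ x y : H, ⟪S x, y⟫_ℂ = ⟪x, S y⟫_ℂ :=
    fun x y => hsqrtA.1 x y
  have hBsym : ∀ x y : H, ⟪B x, y⟫_ℂ = ⟪x, B y⟫_ℂ :=
    fun x y => hsqrtA1.1 x y
  have hPsym : ∀ x y : H, ⟪P x, y⟫_ℂ = ⟪x, P y⟫_ℂ :=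
    ContinuousLinearMap.isSelfAdjoint_iff_isSymmetric.mp hP
  have hPP : ∀ x : H, P (P x) = P x := by
    intro x
    have := congrArg (fun T : H →L[ℂ] H => T x) hPidem
    simpa using this
  have hBB : ∀ x : H, B (B x) = S (P (S x)) := by
    intro x
    have := congrArg (fun T : H →L[ℂ] H => T x) hsqrtA12
    simpa using this
  -- key inner-product identity
  have key : ∀ x y : H, ⟪B x, B y⟫_ℂ = ⟪P (S x), P (S y)⟫_ℂ := by
    intro x y
    calc ⟪B x, B y⟫_ℂ = ⟪x, B (B y)⟫_ℂ := hBsym x (B y)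
      _ = ⟪x, S (P (S y))⟫_ℂ := by rw [hBB]
      _ = ⟪S x, P (S y)⟫_ℂ := (hSsym x (P (S y))).symm
      _ = ⟪S x, P (P (S y))⟫_ℂ := by rw [hPP]
      _ = ⟪P (S x), P (S y)⟫_ℂ := (hPsym (S x) (P (S y))).symm
  have normB : ∀ x : H, ‖B x‖ = ‖P (S x)‖ := by
    intro x
    have h := key x x
    rw [inner_self_eq_norm_sq_to_K, inner_self_eq_norm_sq_to_K] at h
    have h2 : ‖B x‖ ^ 2 = ‖P (S x)‖ ^ 2 := by exact_mod_cast h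
    nlinarith [norm_nonneg (B x), norm_nonneg (P (S x))]
  -- injectivity of B
  have hBinj : ∀ x : H, B x = 0 → x = 0 := by
    intro x hx
    have : (sqrtA * P * sqrtA) x = 0 := by
      have : B (B x) = 0 := by rw [hx, map_zero]
      rw [hBB] at this
      simpa using this
    have : x ∈ LinearMap.ker ((sqrtA * P * sqrtA : H →L[ℂ] H) : H →ₗ[ℂ] H) := this
    rw [hker] at this
    simpa using this
  -- range of B is dense
  have hdense : (LinearMap.range (B : H →ₗ[ℂ] H)).topologicalClosure = ⊤ := by
    rw [Submodule.topologicalClosure_eq_top_iff]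
    rw [Submodule.eq_bot_iff]
    intro x hx
    have hBx : B x = 0 := by
      have h0 : ⟪B x, B x⟫_ℂ = 0 := by
        have := hx (B (B x)) ⟨B x, rfl⟩
        rw [hBsym] at this
        exact this
      exact inner_self_eq_zero.mp h0
    exact hBinj x hBx
  have humem : u ∈ closure ((LinearMap.range (B : H →ₗ[ℂ] H) : Submodule ℂ H) : Set H) := by
    rw [← Submodule.topologicalClosure_coe, hdense]
    trivial
  obtain ⟨y, hy_mem, hy_tendsto⟩ := mem_closure_iff_seq_limit.mp humem
  choose w hw using hy_mem
  -- y n = B (w n), B (w n) → u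
  have hBw : Filter.Tendsto (fun n => B (w n)) Filter.atTop (nhds u) := by
    have : (fun n => B (w n)) = y := funext hw
    rw [this]; exact hy_tendsto
  -- the sequence g n = P (S (w n)) is Cauchy
  set g : ℕ → H := fun n => P (S (w n)) with hg
  have hdistg : ∀ m n, dist (g m) (g n) = dist (B (w m)) (B (w n)) := by
    intro m n
    rw [dist_eq_norm, dist_eq_norm]
    have : g m - g n = P (S (w m - w n)) := by simp [hg, map_sub]
    rw [this, ← normB, map_sub]
  have hgC : CauchySeq g := by
    have hBC : CauchySeq (fun n => B (w n)) := hBw.cauchySeq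
    rw [Metric.cauchySeq_iff] at hBC ⊢
    intro ε hε
    obtain ⟨N, hN⟩ := hBC ε hε
    exact ⟨N, fun m hm n hn => by rw [hdistg]; exact hN m hm n hn⟩
  obtain ⟨Wu, hWu⟩ := cauchySeq_tendsto_of_complete hgC
  -- Wu ∈ M, hence P Wu = Wu
  have hWuM : Wu ∈ M := by
    refine hMc.mem_of_tendsto hWu (Filter.Eventually.of_forall fun n => ?_)
    have : g n ∈ LinearMap.range (P : H →ₗ[ℂ] H) := ⟨S (w n), rfl⟩
    rw [hPran] at this
    exact this
  have hPWu : P Wu = Wu := by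
    have : Wu ∈ LinearMap.range (P : H →ₗ[ℂ] H) := by rw [hPran]; exact hWuM
    obtain ⟨z, hz⟩ := this
    rw [← hz]; exact hPP z
  -- v = Wu
  have hvWu : v = Wu := by
    have horth : ∀ z : H, ⟪S z, v - Wu⟫_ℂ = 0 := by
      intro z
      have h1 : ⟪S z, v⟫_ℂ = ⟪B z, u⟫_ℂ := by
        rw [hSsym, ← huv, ← hBsym]
      have h2 : Filter.Tendsto (fun n => ⟪B z, B (w n)⟫_ℂ) Filter.atTop (nhds ⟪B z, u⟫_ℂ) :=
        (continuous_inner.comp (by fun_prop : Continuous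
          (fun x : H => ((B z : H), x)))).continuousAt.tendsto.comp hBw
      have h3 : ∀ n, ⟪B z, B (w n)⟫_ℂ = ⟪S z, g n⟫_ℂ := by
        intro n
        rw [key, hPsym, hPP]
      have h4 : Filter.Tendsto (fun n => ⟪S z, g n⟫_ℂ) Filter.atTop (nhds ⟪S z, Wu⟫_ℂ) :=
        (continuous_inner.comp (by fun_prop : Continuous
          (fun x : H => ((S z : H), x)))).continuousAt.tendsto.comp hWu
      have h5 : ⟪B z, u⟫_ℂ = ⟪S z, Wu⟫_ℂ := by
        refine tendsto_nhds_unique ?_ h4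
        simpa [funext h3] using h2
      rw [inner_sub_right, h1, h5, sub_self]
    have hSx : S (v - Wu) = 0 := by
      have hall : ∀ z : H, ⟪z, S (v - Wu)⟫_ℂ = 0 := fun z => by
        rw [← hSsym]; exact horth z
      exact inner_self_eq_zero.mp (hall (S (v - Wu)))
    have hAx : A (v - Wu) = 0 := by
      have := congrArg (fun T : H →L[ℂ] H => T (v - Wu)) hsqrtA2
      rw [← this]
      simpa [hS] using congrArg S hSx
    have : v - Wu ∈ LinearMap.ker (A : H →ₗ[ℂ] H) := hAx
    rw [hAker] at this
    have : v - Wu = 0 := by simpa using this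
    exact sub_eq_zero.mp this
  -- conclude
  have hnormg : Filter.Tendsto (fun n => ‖g n‖) Filter.atTop (nhds ‖Wu‖) :=
    hWu.norm
  have hnormB : Filter.Tendsto (fun n => ‖B (w n)‖) Filter.atTop (nhds ‖u‖) :=
    hBw.norm
  have heq : (fun n => ‖g n‖) = fun n => ‖B (w n)‖ := funext fun n => (normB (w n)).symm
  rw [heq] at hnormg
  have : ‖Wu‖ = ‖u‖ := tendsto_nhds_unique hnormg hnormB
  rw [hvWu, this]
end

section
/- Let A ∈ B₀⁺(H) with ran A ≠ H, and let P₁ and P₂ be orthogonal projections on H such that ran P_k ∩ ran A^{1/2} = {0} and ran(I − P_k) ∩ ran A^{1/2} = {0} for k = 1, 2. Define A₁ := A^{1/2} P₁ A^{1/2} and A₂ := A₁^{1/2} P₂ A₁^{1/2}. Then there exists an orthogonal projection P₁₂ on H such that A₂ = A^{1/2} P₁₂ A^{1/2}, and this projection satisfies ran P₁₂ ∩ ran A^{1/2} = {0} and ran(I − P₁₂) ∩ ran A^{1/2} = {0}. -/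
open ContinuousLinearMap

/-- Proposition 3.3 -/
theorem stmt_3
    {H : Type*} [NormedAddCommGroup H] [InnerProductSpace ℂ H] [CompleteSpace H]
    [TopologicalSpace.SeparableSpace H] (hinf : ¬ FiniteDimensional ℂ H)
    (A sqrtA sqrtA1 : H →L[ℂ] H)
    (hA : A.IsPositive) (hAker : LinearMap.ker (A : H →ₗ[ℂ] H) = ⊥) (hAran : LinearMap.range (A : H →ₗ[ℂ] H) ≠ ⊤)
    (hsqrtA : sqrtA.IsPositive) (hsqrtA2 : sqrtA * sqrtA = A)
    (P₁ P₂ : H →L[ℂ] H)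
    (hP₁ : IsSelfAdjoint P₁) (hP₁idem : P₁ * P₁ = P₁)
    (hP₂ : IsSelfAdjoint P₂) (hP₂idem : P₂ * P₂ = P₂)
    (h₁ : LinearMap.range (P₁ : H →ₗ[ℂ] H) ⊓ LinearMap.range (sqrtA : H →ₗ[ℂ] H) = ⊥)
    (h₁' : LinearMap.range ((1 - P₁ : H →L[ℂ] H) : H →ₗ[ℂ] H) ⊓ LinearMap.range (sqrtA : H →ₗ[ℂ] H) = ⊥)
    (h₂ : LinearMap.range (P₂ : H →ₗ[ℂ] H) ⊓ LinearMap.range (sqrtA : H →ₗ[ℂ] H) = ⊥)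
    (h₂' : LinearMap.range ((1 - P₂ : H →L[ℂ] H) : H →ₗ[ℂ] H) ⊓ LinearMap.range (sqrtA : H →ₗ[ℂ] H) = ⊥)
    (hsqrtA1 : sqrtA1.IsPositive) (hsqrtA12 : sqrtA1 * sqrtA1 = sqrtA * P₁ * sqrtA) :
    ∃ P₁₂ : H →L[ℂ] H, IsSelfAdjoint P₁₂ ∧ P₁₂ * P₁₂ = P₁₂ ∧
      sqrtA1 * P₂ * sqrtA1 = sqrtA * P₁₂ * sqrtA ∧
      LinearMap.range (P₁₂ : H →ₗ[ℂ] H) ⊓ LinearMap.range (sqrtA : H →ₗ[ℂ] H) = ⊥ ∧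
      LinearMap.range ((1 - P₁₂ : H →L[ℂ] H) : H →ₗ[ℂ] H) ⊓ LinearMap.range (sqrtA : H →ₗ[ℂ] H) = ⊥ := by
  classical
  have hsAsa : IsSelfAdjoint sqrtA := hsqrtA.isSelfAdjoint
  have hs1sa : IsSelfAdjoint sqrtA1 := hsqrtA1.isSelfAdjoint
  -- sqrtA is injective
  have hkerA : ∀ x : H, sqrtA x = 0 → x = 0 := by
    intro x hx
    have hAx : A x = 0 := by
      rw [← hsqrtA2]; simp [mul_apply_eq_comp, hx]
    have : x ∈ LinearMap.ker (A : H →ₗ[ℂ] H) := LinearMap.mem_ker.mpr hAx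
    rw [hAker] at this; simpa using this
  -- sqrtA1 is injective
  have hker1 : ∀ x : H, sqrtA1 x = 0 → x = 0 := by
    intro x hx
    have h1 : sqrtA (P₁ (sqrtA x)) = 0 := by
      have : (sqrtA * P₁ * sqrtA) x = 0 := by
        rw [← hsqrtA12]; simp [mul_apply_eq_comp, hx]
      simpa [mul_apply_eq_comp] using this
    have h2 : P₁ (sqrtA x) = 0 := hkerA _ h1
    have h3 : sqrtA x ∈ LinearMap.range ((1 - P₁ : H →L[ℂ] H) : H →ₗ[ℂ] H) ⊓ LinearMap.range (sqrtA : H →ₗ[ℂ] H) := by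
      refine Submodule.mem_inf.mpr ⟨⟨sqrtA x, ?_⟩, ⟨x, rfl⟩⟩
      simp [sub_apply, h2]
    rw [h₁'] at h3
    exact hkerA x (by simpa using h3)
  have hinj1 : Function.Injective (sqrtA1.toLinearMap) := by
    intro a b hab
    have h0 : sqrtA1 (a - b) = 0 := by
      simp only [map_sub]
      simpa [sub_eq_zero] using hab
    exact sub_eq_zero.mp (hker1 _ h0)
  -- inner product manipulation helpers
  have hinnA : ∀ x y : H, inner ℂ (sqrtA x) y = (inner ℂ x (sqrtA y) : ℂ) := by
    intro x y
    rw [← hsAsa.adjoint_eq, ContinuousLinearMap.adjoint_inner_left, hsAsa.adjoint_eq]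
  have hinn1 : ∀ x y : H, inner ℂ (sqrtA1 x) y = (inner ℂ x (sqrtA1 y) : ℂ) := by
    intro x y
    rw [← hs1sa.adjoint_eq, ContinuousLinearMap.adjoint_inner_left, hs1sa.adjoint_eq]
  have hinnP₁ : ∀ x y : H, inner ℂ (P₁ x) y = (inner ℂ x (P₁ y) : ℂ) := by
    intro x y
    rw [← hP₁.adjoint_eq, ContinuousLinearMap.adjoint_inner_left, hP₁.adjoint_eq]
  -- the key norm identity
  have hnorm : ∀ x : H, ‖P₁ (sqrtA x)‖ = ‖sqrtA1 x‖ := by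
    intro x
    have e1 : (inner ℂ (P₁ (sqrtA x)) (P₁ (sqrtA x)) : ℂ)
        = inner ℂ (sqrtA1 x) (sqrtA1 x) := by
      calc (inner ℂ (P₁ (sqrtA x)) (P₁ (sqrtA x)) : ℂ)
          = inner ℂ (sqrtA x) (P₁ (P₁ (sqrtA x))) := hinnP₁ _ _
        _ = inner ℂ (sqrtA x) (P₁ (sqrtA x)) := by rw [← mul_apply_eq_comp P₁ P₁, hP₁idem]
        _ = inner ℂ x (sqrtA (P₁ (sqrtA x))) := hinnA _ _
        _ = inner ℂ x ((sqrtA * P₁ * sqrtA) x) := by simp [mul_apply_eq_comp]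
        _ = inner ℂ x (sqrtA1 (sqrtA1 x)) := by rw [← hsqrtA12]; simp [mul_apply_eq_comp]
        _ = inner ℂ (sqrtA1 x) (sqrtA1 x) := (hinn1 _ _).symm
    rw [inner_self_eq_norm_sq_to_K, inner_self_eq_norm_sq_to_K] at e1
    have e3 : (‖P₁ (sqrtA x)‖ : ℝ) ^ 2 = (‖sqrtA1 x‖ : ℝ) ^ 2 := by
      exact_mod_cast e1
    calc ‖P₁ (sqrtA x)‖ = Real.sqrt (‖P₁ (sqrtA x)‖ ^ 2) := (Real.sqrt_sq (norm_nonneg _)).symm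
      _ = Real.sqrt (‖sqrtA1 x‖ ^ 2) := by rw [e3]
      _ = ‖sqrtA1 x‖ := Real.sqrt_sq (norm_nonneg _)
  -- the range of sqrtA1 is dense
  set D : Submodule ℂ H := LinearMap.range (sqrtA1.toLinearMap) with hD
  have hDdense : Dense (D : Set H) := by
    rw [Submodule.dense_iff_topologicalClosure_eq_top,
      Submodule.topologicalClosure_eq_top_iff, Submodule.eq_bot_iff]
    intro v hv
    have h0 : (inner ℂ (sqrtA1 (sqrtA1 v)) v : ℂ) = 0 := hv _ ⟨sqrtA1 v, rfl⟩
    have h1 : (inner ℂ (sqrtA1 v) (sqrtA1 v) : ℂ) = 0 :=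
      (hinn1 (sqrtA1 v) v).symm.trans h0
    exact hker1 v (inner_self_eq_zero.mp h1)
  -- the linear equivalence onto the range of sqrtA1
  set eqv : H ≃ₗ[ℂ] D := LinearEquiv.ofInjective (sqrtA1.toLinearMap) hinj1 with heqv
  have heqvcoe : ∀ x : H, ((eqv x : H)) = sqrtA1 x := fun x => rfl
  -- the isometry on D
  set flin : D →ₗ[ℂ] H := ((P₁.comp sqrtA).toLinearMap).comp (eqv.symm.toLinearMap) with hflin
  have hflin_eqv : ∀ x : H, flin (eqv x) = P₁ (sqrtA x) := by
    intro x; simp [hflin]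
  have hflin_norm : ∀ u : D, ‖flin u‖ = ‖u‖ := by
    intro u
    obtain ⟨x, rfl⟩ := eqv.surjective u
    rw [hflin_eqv]
    have h4 : ‖(eqv x : D)‖ = ‖((eqv x : D) : H)‖ := rfl
    rw [h4, heqvcoe, hnorm]
  set fc : D →L[ℂ] H := flin.mkContinuous 1 (fun u => by rw [hflin_norm, one_mul]) with hfc
  have hfc_apply : ∀ u : D, fc u = flin u := fun u => rfl
  -- extend to an isometry V on all of H
  have hsubdense : DenseRange (D.subtypeL) := by
    show Dense (Set.range (D.subtypeL))
    have h5 : Set.range (D.subtypeL) = (D : Set H) := Subtype.range_coe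
    rw [h5]; exact hDdense
  have hsubind : IsUniformInducing (D.subtypeL) :=
    isUniformEmbedding_subtype_val.isUniformInducing
  set V : H →L[ℂ] H := fc.extend D.subtypeL with hV
  have hVe : ∀ u : D, V (u : H) = fc u := fun u =>
    ContinuousLinearMap.extend_eq fc hsubdense hsubind u
  have hVs1 : ∀ x : H, V (sqrtA1 x) = P₁ (sqrtA x) := by
    intro x
    have hmem : sqrtA1 x ∈ D := ⟨x, rfl⟩
    have h6 : V ((⟨sqrtA1 x, hmem⟩ : D) : H) = fc ⟨sqrtA1 x, hmem⟩ := hVe _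
    rw [hfc_apply] at h6
    have he : (⟨sqrtA1 x, hmem⟩ : D) = eqv x := by
      apply Subtype.ext; rw [heqvcoe]
    rw [he, hflin_eqv] at h6
    exact h6
  have hVnorm : ∀ y : H, ‖V y‖ = ‖y‖ := by
    intro y
    refine hsubdense.induction_on y (isClosed_eq (continuous_norm.comp V.continuous)
      continuous_norm) ?_
    intro u
    show ‖V (u : H)‖ = ‖(u : H)‖
    rw [hVe, hfc_apply, hflin_norm]
    rfl
  set VLI : H →ₗᵢ[ℂ] H := ⟨V.toLinearMap, hVnorm⟩ with hVLI
  have hVinner : ∀ x y : H, (inner ℂ (V x) (V y) : ℂ) = inner ℂ x y := fun x y =>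
    VLI.inner_map_map x y
  set W : H →L[ℂ] H := ContinuousLinearMap.adjoint V with hW
  have hWV : W * V = 1 := by
    ext x
    refine ext_inner_right ℂ ?_
    intro y
    rw [mul_apply_eq_comp, hW, ContinuousLinearMap.adjoint_inner_left]
    simpa using hVinner x y
  -- P₁ * V = V
  have hP₁V : P₁ * V = V := by
    ext y
    rw [mul_apply_eq_comp]
    refine hsubdense.induction_on y (isClosed_eq (P₁.continuous.comp V.continuous)
      V.continuous) ?_
    intro u
    obtain ⟨x, hx⟩ := u.2
    have hux : (u : H) = sqrtA1 x := hx.symm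
    show P₁ (V (u : H)) = V (u : H)
    rw [hux, hVs1, ← mul_apply_eq_comp P₁ P₁, hP₁idem]
  -- V * sqrtA1 = P₁ * sqrtA as operators
  have hVs1' : V * sqrtA1 = P₁ * sqrtA := by
    ext x; simp [mul_apply_eq_comp, hVs1]
  -- sqrtA1 * W = sqrtA * P₁
  have hs1W : sqrtA1 * W = sqrtA * P₁ := by
    have h7 := congrArg star hVs1'
    rw [star_mul, star_mul, hs1sa.star_eq, hsAsa.star_eq, hP₁.star_eq] at h7
    rw [hW, ← ContinuousLinearMap.star_eq_adjoint]
    exact h7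
  -- sqrtA1 = sqrtA * V
  have hs1V : sqrtA1 = sqrtA * V := by
    calc sqrtA1 = sqrtA1 * (W * V) := by rw [hWV, mul_one]
      _ = (sqrtA1 * W) * V := by rw [mul_assoc]
      _ = (sqrtA * P₁) * V := by rw [hs1W]
      _ = sqrtA * (P₁ * V) := by rw [mul_assoc]
      _ = sqrtA * V := by rw [hP₁V]
  -- W * sqrtA = sqrtA1
  have hWs : W * sqrtA = sqrtA1 := by
    have h8 := congrArg star hs1V
    rw [star_mul, hs1sa.star_eq, hsAsa.star_eq, ContinuousLinearMap.star_eq_adjoint,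
      ← hW] at h8
    exact h8.symm
  have hQidem : (V * P₂ * W) * (V * P₂ * W) = V * P₂ * W := by
    have hWVassoc : ∀ X : H →L[ℂ] H, W * (V * X) = X := by
      intro X; rw [← mul_assoc, hWV, one_mul]
    calc (V * P₂ * W) * (V * P₂ * W)
        = V * (P₂ * (W * (V * (P₂ * W)))) := by simp only [mul_assoc]
      _ = V * (P₂ * (P₂ * W)) := by rw [hWVassoc]
      _ = V * ((P₂ * P₂) * W) := by rw [← mul_assoc P₂ P₂ W]
      _ = V * P₂ * W := by rw [hP₂idem, ← mul_assoc]
  have hWQ : W * (V * P₂ * W) = P₂ * W := by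
    calc W * (V * P₂ * W) = ((W * V) * P₂) * W := by simp only [mul_assoc]
      _ = P₂ * W := by rw [hWV, one_mul]
  -- the projection
  refine ⟨V * P₂ * W, ?_, hQidem, ?_, ?_, ?_⟩
  · show star (V * P₂ * W) = V * P₂ * W
    rw [star_mul, star_mul, hP₂.star_eq, hW, ← ContinuousLinearMap.star_eq_adjoint,
      star_star, ContinuousLinearMap.star_eq_adjoint, ← hW, mul_assoc]
  · rw [hs1V]
    calc (sqrtA * V) * P₂ * (sqrtA * V)
        = sqrtA * V * P₂ * sqrtA1 := by rw [← hs1V]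
      _ = sqrtA * V * P₂ * (W * sqrtA) := by rw [hWs]
      _ = sqrtA * (V * P₂ * W) * sqrtA := by simp only [mul_assoc]
  · -- range condition 1
    rw [Submodule.eq_bot_iff]
    intro u hu
    obtain ⟨hu1, hu2⟩ := Submodule.mem_inf.mp hu
    obtain ⟨y, hy⟩ := hu1
    obtain ⟨x, hx⟩ := hu2
    have hQu : (V * P₂ * W) u = u := by
      rw [← hy, ContinuousLinearMap.coe_coe, ← mul_apply_eq_comp, hQidem]
    have hWuP : P₂ (W u) = W u := by
      conv_rhs => rw [← hQu]
      calc P₂ (W u) = (P₂ * W) u := rfl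
        _ = (W * (V * P₂ * W)) u := by rw [hWQ]
        _ = W ((V * P₂ * W) u) := rfl
    have hWuA : W u = sqrtA (V x) := by
      rw [← hx, ContinuousLinearMap.coe_coe, ← mul_apply_eq_comp, hWs, hs1V, mul_apply_eq_comp]
    have hWu : W u ∈ LinearMap.range (P₂ : H →ₗ[ℂ] H) ⊓ LinearMap.range (sqrtA : H →ₗ[ℂ] H) :=
      Submodule.mem_inf.mpr ⟨⟨W u, hWuP⟩, ⟨V x, hWuA.symm⟩⟩
    rw [h₂] at hWu
    have hWu0 : W u = 0 := by simpa using hWu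
    have h9 : u = V (P₂ (W u)) := by
      conv_lhs => rw [← hQu]
      rfl
    rw [hWu0] at h9
    simpa using h9
  · -- range condition 2
    rw [Submodule.eq_bot_iff]
    intro u hu
    obtain ⟨hu1, hu2⟩ := Submodule.mem_inf.mp hu
    obtain ⟨z, hz⟩ := hu1
    obtain ⟨x, hx⟩ := hu2
    have hcidem : (1 - V * P₂ * W) * (1 - V * P₂ * W) = 1 - V * P₂ * W := by
      rw [mul_sub, sub_mul, sub_mul, hQidem]
      simp only [mul_one, one_mul]
      abel
    have hcu : (1 - V * P₂ * W) u = u := by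
      rw [← hz, ContinuousLinearMap.coe_coe, ← mul_apply_eq_comp, hcidem]
    have hQu0 : (V * P₂ * W) u = 0 := by
      have h10 := hcu
      rw [sub_apply, one_apply_eq_self, sub_eq_self] at h10
      exact h10
    have hPWu0 : P₂ (W u) = 0 := by
      calc P₂ (W u) = (P₂ * W) u := rfl
        _ = (W * (V * P₂ * W)) u := by rw [hWQ]
        _ = W ((V * P₂ * W) u) := rfl
        _ = 0 := by rw [hQu0, map_zero]
    have hWuA : W u = sqrtA1 x := by
      rw [← hx, ContinuousLinearMap.coe_coe, ← mul_apply_eq_comp, hWs]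
    have hWuA' : W u = sqrtA (V x) := by
      rw [hWuA, hs1V, mul_apply_eq_comp]
    have hWu : W u ∈ LinearMap.range ((1 - P₂ : H →L[ℂ] H) : H →ₗ[ℂ] H) ⊓ LinearMap.range (sqrtA : H →ₗ[ℂ] H) := by
      refine Submodule.mem_inf.mpr ⟨⟨W u, ?_⟩, ⟨V x, hWuA'.symm⟩⟩
      rw [ContinuousLinearMap.coe_coe, sub_apply, one_apply_eq_self, hPWu0, sub_zero]
    rw [h₂'] at hWu
    have hWu0 : W u = 0 := by simpa using hWu
    have hx0 : x = 0 := hker1 x (by rw [← hWuA, hWu0])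
    rw [← hx, hx0, map_zero]
end

section
/- Let F, G ∈ B⁺(H) with ker F = {0}, ker G = {0}, and ran F^{1/2} ∩ ran G^{1/2} = {0} (i.e. the parallel sum F : G vanishes). Then there exists a closed subspace M of H such that M ∩ ran (F + G)^{1/2} = {0} and M⊥ ∩ ran (F + G)^{1/2} = {0}. -/
open ContinuousLinearMap

/-- Proposition 3.5, part 1): if `F, G ∈ B⁺(H)` have trivial kernels and
`ran F^{1/2} ∩ ran G^{1/2} = {0}` (i.e. the parallel sum `F : G` vanishes), then there
is a closed subspace `M` of `H` with
`M ∩ ran (F + G)^{1/2} = M⊥ ∩ ran (F + G)^{1/2} = {0}`. -/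
theorem stmt_5
    {H : Type*} [NormedAddCommGroup H] [InnerProductSpace ℂ H] [CompleteSpace H]
    [TopologicalSpace.SeparableSpace H] (hinf : ¬ FiniteDimensional ℂ H)
    (F G sqrtF sqrtG sqrtFG : H →L[ℂ] H)
    (hF : F.IsPositive) (hG : G.IsPositive)
    (hFker : LinearMap.ker (F : H →ₗ[ℂ] H) = ⊥) (hGker : LinearMap.ker (G : H →ₗ[ℂ] H) = ⊥)
    (hsqrtF : sqrtF.IsPositive) (hsqrtF2 : sqrtF * sqrtF = F)
    (hsqrtG : sqrtG.IsPositive) (hsqrtG2 : sqrtG * sqrtG = G)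
    (hsqrtFG : sqrtFG.IsPositive) (hsqrtFG2 : sqrtFG * sqrtFG = F + G)
    (hdisj : LinearMap.range (sqrtF : H →ₗ[ℂ] H) ⊓ LinearMap.range (sqrtG : H →ₗ[ℂ] H) = ⊥) :
    ∃ M : Submodule ℂ H, IsClosed (M : Set H) ∧
      M ⊓ LinearMap.range (sqrtFG : H →ₗ[ℂ] H) = ⊥ ∧ Mᗮ ⊓ LinearMap.range (sqrtFG : H →ₗ[ℂ] H) = ⊥ := by
  set T := sqrtFG with hTdef
  have hTsa : adjoint T = T := isSelfAdjoint_iff'.mp hsqrtFG.isSelfAdjoint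
  have hFsa : adjoint sqrtF = sqrtF := isSelfAdjoint_iff'.mp hsqrtF.isSelfAdjoint
  have hGsa : adjoint sqrtG = sqrtG := isSelfAdjoint_iff'.mp hsqrtG.isSelfAdjoint
  -- the basic norm identity ‖sqrtF x‖² + ‖sqrtG x‖² = ‖T x‖²
  have inner_sq : ∀ (A B : H →L[ℂ] H), adjoint A = A → A * A = B →
      ∀ x : H, (inner ℂ (A x) (A x) : ℂ) = inner ℂ x (B x) := by
    intro A B hA hB x
    have h1 : (inner ℂ (A x) (A x) : ℂ) = inner ℂ x (A (A x)) := by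
      nth_rewrite 1 [← hA]
      rw [adjoint_inner_left]
    rw [h1]
    congr 1
    rw [← hB]
    rfl
  have hnorm : ∀ x : H, ‖sqrtF x‖ ^ 2 + ‖sqrtG x‖ ^ 2 = ‖T x‖ ^ 2 := by
    intro x
    have h1 : (inner ℂ (sqrtF x) (sqrtF x) : ℂ) + inner ℂ (sqrtG x) (sqrtG x)
        = inner ℂ (T x) (T x) := by
      rw [inner_sq sqrtF F hFsa hsqrtF2 x, inner_sq sqrtG G hGsa hsqrtG2 x,
        inner_sq T (F + G) hTsa hsqrtFG2 x, ← inner_add_right]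
      rfl
    rw [inner_self_eq_norm_sq_to_K, inner_self_eq_norm_sq_to_K,
      inner_self_eq_norm_sq_to_K] at h1
    exact_mod_cast h1
  have hbF : ∀ x : H, ‖sqrtF x‖ ≤ ‖T x‖ := by
    intro x
    have h := hnorm x
    nlinarith [norm_nonneg (sqrtF x), norm_nonneg (sqrtG x), norm_nonneg (T x),
      sq_nonneg ‖sqrtG x‖]
  have hbG : ∀ x : H, ‖sqrtG x‖ ≤ ‖T x‖ := by
    intro x
    have h := hnorm x
    nlinarith [norm_nonneg (sqrtF x), norm_nonneg (sqrtG x), norm_nonneg (T x),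
      sq_nonneg ‖sqrtF x‖]
  have hFx0 : ∀ x : H, sqrtF x = 0 → x = 0 := by
    intro x hx
    have hx' : F x = 0 := by
      rw [← hsqrtF2]; show sqrtF (sqrtF x) = 0; rw [hx, map_zero]
    exact (Submodule.eq_bot_iff _).mp hFker x (LinearMap.mem_ker.mpr hx')
  have hGx0 : ∀ x : H, sqrtG x = 0 → x = 0 := by
    intro x hx
    have hx' : G x = 0 := by
      rw [← hsqrtG2]; show sqrtG (sqrtG x) = 0; rw [hx, map_zero]
    exact (Submodule.eq_bot_iff _).mp hGker x (LinearMap.mem_ker.mpr hx')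
  have hT0 : ∀ x : H, T x = 0 → x = 0 := by
    intro x hx
    have h1 : ‖sqrtF x‖ ≤ 0 := by simpa [hx] using hbF x
    exact hFx0 x (norm_le_zero_iff.mp h1)
  have hTinj : Function.Injective T := by
    intro a b hab
    have h1 : T (a - b) = 0 := by rw [map_sub, hab, sub_self]
    exact sub_eq_zero.mp (hT0 _ h1)
  -- dense range of T
  have hTorth : (LinearMap.range (T : H →ₗ[ℂ] H))ᗮ = ⊥ := by
    rw [Submodule.eq_bot_iff]
    intro x hx
    have h1 : T x = 0 := by
      have h2 : (inner ℂ (T (T x)) x : ℂ) = 0 :=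
        hx _ (LinearMap.mem_range_self _ _)
      have h3 : (inner ℂ (T x) (T x) : ℂ) = 0 := by
        have h4 : (inner ℂ (T x) (T x) : ℂ) = inner ℂ (T (T x)) x := by
          nth_rewrite 2 [← hTsa]
          rw [adjoint_inner_right]
        rw [h4, h2]
      exact inner_self_eq_zero.mp h3
    exact hT0 x h1
  have hTdense : DenseRange ⇑T := by
    have h1 : (LinearMap.range (T : H →ₗ[ℂ] H)).topologicalClosure = ⊤ :=
      Submodule.topologicalClosure_eq_top_iff.mpr hTorth
    have h2 : Dense ((LinearMap.range (T : H →ₗ[ℂ] H) : Submodule ℂ H) : Set H) :=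
      Submodule.dense_iff_topologicalClosure_eq_top.mpr h1
    simpa [DenseRange, LinearMap.coe_range] using h2
  -- Douglas-type factorizations: operators E₁, E₂ with E₁ ∘ T = sqrtF, E₂ ∘ T = sqrtG
  set R : Submodule ℂ H := LinearMap.range (T : H →ₗ[ℂ] H) with hRdef
  have hRdense : DenseRange ⇑R.subtypeL := by
    have h2 : Dense ((R : Submodule ℂ H) : Set H) := by
      have h1 : R.topologicalClosure = ⊤ :=
        Submodule.topologicalClosure_eq_top_iff.mpr hTorth
      exact Submodule.dense_iff_topologicalClosure_eq_top.mpr h1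
    simpa [DenseRange, Submodule.coe_subtypeL', Subtype.range_coe] using h2
  have hRind : IsUniformInducing ⇑R.subtypeL :=
    isometry_subtype_coe.isUniformInducing
  set eT : H ≃ₗ[ℂ] R := LinearEquiv.ofInjective (T : H →ₗ[ℂ] H) hTinj with heTdef
  have heT : ∀ x : H, ((eT x : R) : H) = T x := fun x => by
    rw [heTdef]
    exact LinearEquiv.ofInjective_apply (T : H →ₗ[ℂ] H) x
  -- construction of the contraction factor for a square root dominated by T
  have key : ∀ (A : H →L[ℂ] H), (∀ x : H, ‖A x‖ ≤ ‖T x‖) →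
      ∃ E : H →L[ℂ] H, ∀ x : H, E (T x) = A x := by
    intro A hA
    let f₀lin : R →ₗ[ℂ] H := (A : H →ₗ[ℂ] H).comp (eT.symm : R →ₗ[ℂ] H)
    have hf₀ : ∀ u : R, ‖f₀lin u‖ ≤ 1 * ‖u‖ := by
      intro u
      obtain ⟨x, rfl⟩ := eT.surjective u
      have h1 : f₀lin (eT x) = A x := by
        simp only [f₀lin, LinearMap.comp_apply, LinearEquiv.coe_coe,
          LinearEquiv.symm_apply_apply]
        rfl
      have h2 : ‖eT x‖ = ‖T x‖ := by
        rw [← heT x]; rfl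
      rw [h1, h2, one_mul]
      exact hA x
    let f₀ : R →L[ℂ] H := f₀lin.mkContinuous 1 hf₀
    refine ⟨f₀.extend R.subtypeL, fun x => ?_⟩
    have h3 : R.subtypeL (eT x) = T x := heT x
    have h4 := ContinuousLinearMap.extend_eq f₀ hRdense hRind (eT x)
    rw [h3] at h4
    rw [h4]
    show f₀lin (eT x) = A x
    simp only [f₀lin, LinearMap.comp_apply, LinearEquiv.coe_coe,
      LinearEquiv.symm_apply_apply]
    rfl
  obtain ⟨E₁, hE₁⟩ := key sqrtF hbF
  obtain ⟨E₂, hE₂⟩ := key sqrtG hbG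
  have hE₁c : E₁ * T = sqrtF := by ext x; exact hE₁ x
  have hE₂c : E₂ * T = sqrtG := by ext x; exact hE₂ x
  have hE₁a : T * adjoint E₁ = sqrtF := by
    have h := congrArg (fun A : H →L[ℂ] H => star A) hE₁c
    simp only [star_mul, star_eq_adjoint] at h
    rwa [hTsa, hFsa] at h
  have hE₂a : T * adjoint E₂ = sqrtG := by
    have h := congrArg (fun A : H →L[ℂ] H => star A) hE₂c
    simp only [star_mul, star_eq_adjoint] at h
    rwa [hTsa, hGsa] at h
  set S₁ : H →L[ℂ] H := adjoint E₁ * E₁ with hS₁def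
  set S₂ : H →L[ℂ] H := adjoint E₂ * E₂ with hS₂def
  have hFS : F = T * S₁ * T := by
    rw [← hsqrtF2]
    nth_rewrite 1 [← hE₁a]
    nth_rewrite 1 [← hE₁c]
    rw [hS₁def]; noncomm_ring
  have hGS : G = T * S₂ * T := by
    rw [← hsqrtG2]
    nth_rewrite 1 [← hE₂a]
    nth_rewrite 1 [← hE₂c]
    rw [hS₂def]; noncomm_ring
  -- cancellation: T A T = T B T → A = B
  have hcancel : ∀ A B : H →L[ℂ] H, T * A * T = T * B * T → A = B := by
    intro A B h
    have h1 : ∀ x : H, A (T x) = B (T x) := by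
      intro x
      apply hTinj
      have := congrArg (fun f : H →L[ℂ] H => f x) h
      simpa [ContinuousLinearMap.mul_apply] using this
    have h2 : (⇑A) = ⇑B := hTdense.equalizer A.continuous B.continuous (funext h1)
    exact ContinuousLinearMap.coeFn_injective h2
  have hsum : S₁ + S₂ = 1 := by
    apply hcancel
    have h1 : T * (S₁ + S₂) * T = T * S₁ * T + T * S₂ * T := by noncomm_ring
    have h2 : T * (1 : H →L[ℂ] H) * T = T * T := by noncomm_ring
    rw [h1, h2, ← hFS, ← hGS, hsqrtFG2]
  have hS₂eq : S₂ = 1 - S₁ := by rw [← hsum]; noncomm_ring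
  have hcomm : S₁ * S₂ = S₂ * S₁ := by rw [hS₂eq]; noncomm_ring
  -- the disjointness hypothesis forces S₁ S₂ = 0
  have hTS₁ : T * S₁ = sqrtF * E₁ := by
    rw [hS₁def, ← mul_assoc, hE₁a]
  have hTS₂ : T * S₂ = sqrtG * E₂ := by
    rw [hS₂def, ← mul_assoc, hE₂a]
  have hzero : S₁ * S₂ = 0 := by
    ext u
    show (S₁ * S₂) u = 0
    have hmem : T ((S₁ * S₂) u) ∈
        LinearMap.range (sqrtF : H →ₗ[ℂ] H) ⊓ LinearMap.range (sqrtG : H →ₗ[ℂ] H) := by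
      constructor
      · have h1 : T ((S₁ * S₂) u) = sqrtF (E₁ (S₂ u)) := by
          have := congrArg (fun f : H →L[ℂ] H => f (S₂ u)) hTS₁
          simpa [ContinuousLinearMap.mul_apply] using this
        rw [h1]
        exact LinearMap.mem_range_self _ _
      · have h1 : T ((S₁ * S₂) u) = sqrtG (E₂ (S₁ u)) := by
          have h2 : (S₁ * S₂) u = (S₂ * S₁) u := by rw [hcomm]
          have h3 := congrArg (fun f : H →L[ℂ] H => f (S₁ u)) hTS₂
          simp only [ContinuousLinearMap.mul_apply] at h2 h3 ⊢
          rw [h2, h3]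
        rw [h1]
        exact LinearMap.mem_range_self _ _
    rw [hdisj] at hmem
    have h4 : T ((S₁ * S₂) u) = 0 := hmem
    have h5 := hT0 _ h4
    simpa using h5
  have hidem : S₁ * S₁ = S₁ := by
    have h1 : S₁ * (1 - S₁) = 0 := by rw [← hS₂eq]; exact hzero
    have h2 : S₁ - S₁ * S₁ = 0 := by rw [← h1]; noncomm_ring
    have := sub_eq_zero.mp h2
    exact this.symm
  have hS₁sa : adjoint S₁ = S₁ := by
    rw [hS₁def, ← star_eq_adjoint, ← star_eq_adjoint, star_mul, star_star]
  -- the subspace M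
  refine ⟨LinearMap.ker (S₂ : H →ₗ[ℂ] H), ?_, ?_, ?_⟩
  · exact ContinuousLinearMap.isClosed_ker S₂
  · rw [Submodule.eq_bot_iff]
    rintro x ⟨hxM, hxR⟩
    obtain ⟨y, rfl⟩ := hxR
    have h1 : S₂ (T y) = 0 := LinearMap.mem_ker.mp hxM
    have h2 : G y = 0 := by
      have h3 := congrArg (fun f : H →L[ℂ] H => f y) hGS
      simp only [ContinuousLinearMap.mul_apply] at h3
      rw [h3, h1, map_zero]
    have h4 : y = 0 := (Submodule.eq_bot_iff _).mp hGker y (LinearMap.mem_ker.mpr h2)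
    rw [h4, map_zero]
  · rw [Submodule.eq_bot_iff]
    rintro x ⟨hxO, hxR⟩
    obtain ⟨y, rfl⟩ := hxR
    -- first show S₁ (T y) = 0
    have hS₁x : S₁ (T y) = 0 := by
      have hmemM : S₁ (T y) ∈ LinearMap.ker (S₂ : H →ₗ[ℂ] H) := by
        rw [LinearMap.mem_ker]
        have h1 : S₂ (S₁ (T y)) = (S₁ * S₂) (T y) := by
          have h2 : (S₂ * S₁) (T y) = (S₁ * S₂) (T y) := by rw [hcomm]
          simpa [ContinuousLinearMap.mul_apply] using h2
        rw [ContinuousLinearMap.coe_coe, h1, hzero]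
        rfl
      have h0 : (inner ℂ (S₁ (T y)) (T y) : ℂ) = 0 :=
        hxO _ hmemM
      have h5 : (inner ℂ (S₁ (T y)) (S₁ (T y)) : ℂ) = 0 := by
        nth_rewrite 1 [← hS₁sa]
        rw [adjoint_inner_left]
        have h6 : S₁ (S₁ (T y)) = S₁ (T y) := by
          have := congrArg (fun f : H →L[ℂ] H => f (T y)) hidem
          simpa [ContinuousLinearMap.mul_apply] using this
        rw [h6, ← inner_conj_symm, h0, map_zero]
      exact inner_self_eq_zero.mp h5
    have h2 : F y = 0 := by
      have h3 := congrArg (fun f : H →L[ℂ] H => f y) hFS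
      simp only [ContinuousLinearMap.mul_apply] at h3
      rw [h3, hS₁x, map_zero]
    have h4 : y = 0 := (Submodule.eq_bot_iff _).mp hFker y (LinearMap.mem_ker.mpr h2)
    rw [h4, map_zero]
end

section
/- Let W ∈ B₀⁺(H) with ran W ≠ H, and let L be a closed subspace of H such that L ∩ ran W^{1/2} = {0} and L⊥ ∩ ran W^{1/2} = {0}. Define V₂ := W^{1/2}(I + P_L)W^{1/2}. Then ran V₂^{1/2} = ran W^{1/2} and ran V₂ ∩ ran W = {0}. Also, the operator V₁ := W^{1/2} P_L W^{1/2} satisfies ran V₁^{1/2} ∩ ran W = {0} and ran V₁ ⊆ ran W^{1/2}. -/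
open ContinuousLinearMap in
lemma douglas_aux {H : Type*} [NormedAddCommGroup H] [InnerProductSpace ℂ H] [CompleteSpace H]
    (A B : H →L[ℂ] H) (C : ℝ) (h : ∀ x, ‖A x‖ ≤ C * ‖B x‖) :
    ∃ D : H →L[ℂ] H, ∀ x, D (B x) = A x := by
  set R : Submodule ℂ H := LinearMap.range (B : H →ₗ[ℂ] H) with hR
  set K := R.topologicalClosure with hK
  haveI : CompleteSpace K := R.isClosed_topologicalClosure.completeSpace_coe
  have hker : LinearMap.ker (B : H →ₗ[ℂ] H) ≤ LinearMap.ker (A : H →ₗ[ℂ] H) := by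
    intro x hx
    rw [LinearMap.mem_ker] at hx ⊢
    have hx' : B x = 0 := hx
    have h2 := h x
    rw [hx'] at h2
    simp only [norm_zero, mul_zero] at h2
    simpa [norm_le_zero_iff] using h2
  let D₀ : R →ₗ[ℂ] H :=
    ((LinearMap.ker (B : H →ₗ[ℂ] H)).liftQ (A : H →ₗ[ℂ] H) hker).comp
      ((LinearMap.quotKerEquivRange (B : H →ₗ[ℂ] H)).symm.toLinearMap)
  have hD₀ : ∀ (x : H) (hx : B x ∈ R), D₀ ⟨B x, hx⟩ = A x := by
    intro x hx
    have h1 : (LinearMap.quotKerEquivRange (B : H →ₗ[ℂ] H))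
        (Submodule.Quotient.mk x) = ⟨B x, hx⟩ := by
      apply Subtype.ext
      simp [LinearMap.quotKerEquivRange_apply_mk]
    have h2 := congrArg (LinearMap.quotKerEquivRange (B : H →ₗ[ℂ] H)).symm h1
    rw [LinearEquiv.symm_apply_apply] at h2
    show ((LinearMap.ker (B : H →ₗ[ℂ] H)).liftQ (A : H →ₗ[ℂ] H) hker)
        ((LinearMap.quotKerEquivRange (B : H →ₗ[ℂ] H)).symm ⟨B x, hx⟩) = A x
    rw [← h2, Submodule.liftQ_apply]
    rfl
  have hbound : ∀ w : R, ‖D₀ w‖ ≤ max C 0 * ‖w‖ := by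
    intro w
    obtain ⟨x, hx⟩ := w.2
    have hx' : B x = (w : H) := hx
    have hw2 : B x ∈ R := hx' ▸ w.2
    have hweq : w = ⟨B x, hw2⟩ := Subtype.ext hx'.symm
    rw [hweq, hD₀]
    exact le_trans (h x)
      (mul_le_mul_of_nonneg_right (le_max_left _ _) (norm_nonneg _))
  let D₀c : R →L[ℂ] H := D₀.mkContinuous (max C 0) hbound
  let e : R →L[ℂ] K := R.subtypeL.codRestrict K fun x => R.le_topologicalClosure x.2
  have he : Isometry e := fun x y => rfl
  have hdense : DenseRange e := by
    intro k
    rw [closure_subtype]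
    have himg : (Subtype.val '' Set.range e) = (R : Set H) := by
      ext y
      constructor
      · rintro ⟨z, ⟨w, rfl⟩, rfl⟩
        exact w.2
      · rintro hy
        exact ⟨e ⟨y, hy⟩, ⟨⟨y, hy⟩, rfl⟩, rfl⟩
    rw [himg, ← Submodule.topologicalClosure_coe]
    exact k.2
  let Dext : K →L[ℂ] H := D₀c.extend e
  refine ⟨Dext.comp (ContinuousLinearMap.adjoint K.subtypeL), fun x => ?_⟩
  have hmemR : B x ∈ R := ⟨x, rfl⟩
  have hmemK : B x ∈ K := R.le_topologicalClosure hmemR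
  have hproj : (ContinuousLinearMap.adjoint K.subtypeL) (B x) = ⟨B x, hmemK⟩ := by
    rw [K.adjoint_subtypeL]
    exact Submodule.orthogonalProjection_mem_subspace_eq_self (⟨B x, hmemK⟩ : K)
  rw [ContinuousLinearMap.comp_apply, hproj]
  have he2 : e ⟨B x, hmemR⟩ = ⟨B x, hmemK⟩ := rfl
  rw [← he2, ContinuousLinearMap.extend_eq (h_dense := hdense) (h_e := he.isUniformInducing)]
  show D₀ ⟨B x, hmemR⟩ = A x
  exact hD₀ x hmemR

open ContinuousLinearMap in
lemma douglas {H : Type*} [NormedAddCommGroup H] [InnerProductSpace ℂ H] [CompleteSpace H]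
    (A B : H →L[ℂ] H) (C : ℝ) (h : ∀ x, ‖A x‖ ≤ C * ‖B x‖) :
    LinearMap.range ((ContinuousLinearMap.adjoint A : H →L[ℂ] H) : H →ₗ[ℂ] H) ≤
      LinearMap.range ((ContinuousLinearMap.adjoint B : H →L[ℂ] H) : H →ₗ[ℂ] H) := by
  obtain ⟨D, hD⟩ := douglas_aux A B C h
  have hcomp : A = D.comp B := by ext x; simp [hD x]
  rintro y ⟨x, rfl⟩
  refine ⟨(ContinuousLinearMap.adjoint D) x, ?_⟩
  rw [hcomp, ContinuousLinearMap.adjoint_comp]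
  rfl

open scoped InnerProductSpace



/-- Section 3.2, examples (a),(b): let `W ∈ B₀⁺(H)` with `ran W ≠ H` and let `L` be a
closed subspace with `L ∩ ran W^{1/2} = L⊥ ∩ ran W^{1/2} = {0}` (with `P := P_L`).
Then `V₂ := W^{1/2}(I + P_L)W^{1/2}` satisfies `ran V₂^{1/2} = ran W^{1/2}` and
`ran V₂ ∩ ran W = {0}`, and `V₁ := W^{1/2} P_L W^{1/2}` satisfies
`ran V₁^{1/2} ∩ ran W = {0}` and `ran V₁ ⊆ ran W^{1/2}`. -/
theorem stmt_19
    {H : Type*} [NormedAddCommGroup H] [InnerProductSpace ℂ H] [CompleteSpace H]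
    [TopologicalSpace.SeparableSpace H] (hinf : ¬ FiniteDimensional ℂ H)
    (W sqrtW : H →L[ℂ] H)
    (hW : W.IsPositive) (hWker : LinearMap.ker (W : H →ₗ[ℂ] H) = ⊥) (hWran : LinearMap.range (W : H →ₗ[ℂ] H) ≠ ⊤)
    (hsqrtW : sqrtW.IsPositive) (hsqrtW2 : sqrtW * sqrtW = W)
    (L : Submodule ℂ H) (hLc : IsClosed (L : Set H))
    (hL : L ⊓ LinearMap.range (sqrtW : H →ₗ[ℂ] H) = ⊥) (hL' : Lᗮ ⊓ LinearMap.range (sqrtW : H →ₗ[ℂ] H) = ⊥)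
    (P : H →L[ℂ] H) (hP : IsSelfAdjoint P) (hPidem : P * P = P)
    (hPran : LinearMap.range (P : H →ₗ[ℂ] H) = L)
    (sqrtV₁ sqrtV₂ : H →L[ℂ] H)
    (hsqrtV₁ : sqrtV₁.IsPositive) (hsqrtV₁2 : sqrtV₁ * sqrtV₁ = sqrtW * P * sqrtW)
    (hsqrtV₂ : sqrtV₂.IsPositive)
    (hsqrtV₂2 : sqrtV₂ * sqrtV₂ = sqrtW * (1 + P) * sqrtW) :
    LinearMap.range (sqrtV₂ : H →ₗ[ℂ] H) = LinearMap.range (sqrtW : H →ₗ[ℂ] H) ∧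
    LinearMap.range ((sqrtW * (1 + P) * sqrtW : H →L[ℂ] H) : H →ₗ[ℂ] H) ⊓ LinearMap.range (W : H →ₗ[ℂ] H) = ⊥ ∧
    LinearMap.range (sqrtV₁ : H →ₗ[ℂ] H) ⊓ LinearMap.range (W : H →ₗ[ℂ] H) = ⊥ ∧
    LinearMap.range ((sqrtW * P * sqrtW : H →L[ℂ] H) : H →ₗ[ℂ] H) ≤ LinearMap.range (sqrtW : H →ₗ[ℂ] H) := by
  -- self-adjointness moves operators across the inner product
  have hadj : ∀ (T : H →L[ℂ] H), IsSelfAdjoint T → ∀ u v : H, ⟪T u, v⟫_ℂ = ⟪u, T v⟫_ℂ := by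
    intro T hT u v
    conv_lhs => rw [← hT.adjoint_eq]
    exact ContinuousLinearMap.adjoint_inner_left T v u
  -- injectivity of sqrtW
  have hkerW : ∀ x : H, sqrtW x = 0 → x = 0 := by
    intro x hx
    have hWx : W x = 0 := by
      rw [← hsqrtW2, ContinuousLinearMap.mul_apply, hx, map_zero]
    have : x ∈ LinearMap.ker (W : H →ₗ[ℂ] H) := LinearMap.mem_ker.mpr hWx
    rw [hWker] at this
    simpa using this
  have hinj : ∀ a b : H, sqrtW a = sqrtW b → a = b := by
    intro a b hab
    have h0 : sqrtW (a - b) = 0 := by rw [map_sub, hab, sub_self]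
    have := hkerW _ h0
    exact sub_eq_zero.mp this
  -- P (P v) = P v
  have hPP : ∀ v : H, P (P v) = P v := by
    intro v
    rw [← ContinuousLinearMap.mul_apply, hPidem]
  -- ⟪v, P v⟫ = ⟪P v, P v⟫
  have hinnP : ∀ v : H, ⟪v, P v⟫_ℂ = ⟪P v, P v⟫_ℂ := by
    intro v
    rw [← hPP v, ← hadj P hP v (P v), hPP]
  -- ‖P v‖ ≤ ‖v‖
  have hPnorm : ∀ v : H, ‖P v‖ ≤ ‖v‖ := by
    intro v
    have h4 : ‖⟪P v, P v⟫_ℂ‖ = ‖P v‖ ^ 2 := by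
      rw [inner_self_eq_norm_sq_to_K]
      simp [norm_pow, abs_norm]
    have h3 : ‖P v‖ ^ 2 ≤ ‖v‖ * ‖P v‖ := by
      calc ‖P v‖ ^ 2 = ‖⟪P v, P v⟫_ℂ‖ := h4.symm
        _ = ‖⟪v, P v⟫_ℂ‖ := by rw [hinnP]
        _ ≤ ‖v‖ * ‖P v‖ := norm_inner_le_norm _ _
    nlinarith [norm_nonneg (P v), norm_nonneg v]
  -- square norm identity for sqrtV₂
  have e1 : ∀ x : H, ‖sqrtV₂ x‖ ^ 2 = ‖sqrtW x‖ ^ 2 + ‖P (sqrtW x)‖ ^ 2 := by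
    intro x
    have c1 : ⟪sqrtV₂ x, sqrtV₂ x⟫_ℂ = ⟪x, (sqrtV₂ * sqrtV₂) x⟫_ℂ := by
      rw [ContinuousLinearMap.mul_apply]
      exact hadj _ hsqrtV₂.isSelfAdjoint _ _
    rw [hsqrtV₂2] at c1
    have c2 : ((sqrtW * (1 + P)) * sqrtW) x = sqrtW (sqrtW x + P (sqrtW x)) := by
      simp [ContinuousLinearMap.mul_apply, ContinuousLinearMap.add_apply]
    rw [c2, ← hadj sqrtW hsqrtW.isSelfAdjoint x (sqrtW x + P (sqrtW x)), inner_add_right,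
      hinnP (sqrtW x)] at c1
    rw [inner_self_eq_norm_sq_to_K, inner_self_eq_norm_sq_to_K,
      inner_self_eq_norm_sq_to_K] at c1
    exact_mod_cast c1
  -- square norm identity for sqrtV₁
  have e2 : ∀ x : H, ‖sqrtV₁ x‖ ^ 2 = ‖P (sqrtW x)‖ ^ 2 := by
    intro x
    have c1 : ⟪sqrtV₁ x, sqrtV₁ x⟫_ℂ = ⟪x, (sqrtV₁ * sqrtV₁) x⟫_ℂ := by
      rw [ContinuousLinearMap.mul_apply]
      exact hadj _ hsqrtV₁.isSelfAdjoint _ _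
    rw [hsqrtV₁2] at c1
    have c2 : ((sqrtW * P) * sqrtW) x = sqrtW (P (sqrtW x)) := by
      simp [ContinuousLinearMap.mul_apply]
    rw [c2, ← hadj sqrtW hsqrtW.isSelfAdjoint x (P (sqrtW x)), hinnP (sqrtW x)] at c1
    rw [inner_self_eq_norm_sq_to_K, inner_self_eq_norm_sq_to_K] at c1
    exact_mod_cast c1
  -- norm bounds
  have b1 : ∀ x : H, ‖sqrtW x‖ ≤ 1 * ‖sqrtV₂ x‖ := by
    intro x
    have hsq : ‖sqrtW x‖ ^ 2 ≤ (1 * ‖sqrtV₂ x‖) ^ 2 := by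
      rw [one_mul, e1 x]
      nlinarith [sq_nonneg (‖P (sqrtW x)‖)]
    calc ‖sqrtW x‖ = Real.sqrt (‖sqrtW x‖ ^ 2) := (Real.sqrt_sq (norm_nonneg _)).symm
      _ ≤ Real.sqrt ((1 * ‖sqrtV₂ x‖) ^ 2) := Real.sqrt_le_sqrt hsq
      _ = 1 * ‖sqrtV₂ x‖ := Real.sqrt_sq (by positivity)
  have b2 : ∀ x : H, ‖sqrtV₂ x‖ ≤ Real.sqrt 2 * ‖sqrtW x‖ := by
    intro x
    have h1 := e1 x
    have h2 := hPnorm (sqrtW x)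
    have h3 : Real.sqrt 2 ^ 2 = 2 := Real.sq_sqrt (by norm_num)
    have hbb : ‖P (sqrtW x)‖ * ‖P (sqrtW x)‖ ≤ ‖sqrtW x‖ * ‖sqrtW x‖ :=
      mul_le_mul h2 h2 (norm_nonneg _) (norm_nonneg _)
    have hsq : ‖sqrtV₂ x‖ ^ 2 ≤ (Real.sqrt 2 * ‖sqrtW x‖) ^ 2 := by
      rw [mul_pow, h3]
      nlinarith [hbb]
    calc ‖sqrtV₂ x‖ = Real.sqrt (‖sqrtV₂ x‖ ^ 2) := (Real.sqrt_sq (norm_nonneg _)).symm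
      _ ≤ Real.sqrt ((Real.sqrt 2 * ‖sqrtW x‖) ^ 2) := Real.sqrt_le_sqrt hsq
      _ = Real.sqrt 2 * ‖sqrtW x‖ := Real.sqrt_sq (by positivity)
  have b3 : ∀ x : H, ‖sqrtV₁ x‖ ≤ 1 * ‖(P * sqrtW) x‖ := by
    intro x
    rw [ContinuousLinearMap.mul_apply, one_mul]
    refine le_of_eq ?_
    calc ‖sqrtV₁ x‖ = Real.sqrt (‖sqrtV₁ x‖ ^ 2) := (Real.sqrt_sq (norm_nonneg _)).symm
      _ = Real.sqrt (‖P (sqrtW x)‖ ^ 2) := by rw [e2 x]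
      _ = ‖P (sqrtW x)‖ := Real.sqrt_sq (norm_nonneg _)
  -- range inclusions via Douglas
  have r1 : LinearMap.range ((sqrtW : H →L[ℂ] H) : H →ₗ[ℂ] H) ≤ LinearMap.range ((sqrtV₂ : H →L[ℂ] H) : H →ₗ[ℂ] H) := by
    have := douglas sqrtW sqrtV₂ 1 b1
    rwa [hsqrtW.isSelfAdjoint.adjoint_eq, hsqrtV₂.isSelfAdjoint.adjoint_eq] at this
  have r2 : LinearMap.range ((sqrtV₂ : H →L[ℂ] H) : H →ₗ[ℂ] H) ≤ LinearMap.range ((sqrtW : H →L[ℂ] H) : H →ₗ[ℂ] H) := by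
    have := douglas sqrtV₂ sqrtW (Real.sqrt 2) b2
    rwa [hsqrtW.isSelfAdjoint.adjoint_eq, hsqrtV₂.isSelfAdjoint.adjoint_eq] at this
  have r3 : LinearMap.range ((sqrtV₁ : H →L[ℂ] H) : H →ₗ[ℂ] H) ≤ LinearMap.range ((sqrtW * P : H →L[ℂ] H) : H →ₗ[ℂ] H) := by
    have := douglas sqrtV₁ (P * sqrtW) 1 b3
    have hadj2 : ContinuousLinearMap.adjoint (P * sqrtW) = sqrtW * P := by
      have : P * sqrtW = P ∘L sqrtW := rfl
      rw [this, ContinuousLinearMap.adjoint_comp, hsqrtW.isSelfAdjoint.adjoint_eq, hP.adjoint_eq]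
      rfl
    rwa [hsqrtV₁.isSelfAdjoint.adjoint_eq, hadj2] at this
  refine ⟨le_antisymm r2 r1, ?_, ?_, ?_⟩
  · -- ran V₂ ∩ ran W = ⊥
    rw [eq_bot_iff]
    intro z hz
    rw [Submodule.mem_inf] at hz
    obtain ⟨⟨x, hx⟩, ⟨y, hy⟩⟩ := hz
    have hx' : sqrtW (sqrtW x + P (sqrtW x)) = z := by
      rw [← hx]
      simp [ContinuousLinearMap.mul_apply, ContinuousLinearMap.add_apply]
    have hy' : sqrtW (sqrtW y) = z := by
      rw [← hy, ← hsqrtW2, ContinuousLinearMap.coe_coe, ContinuousLinearMap.mul_apply]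
    have heq : sqrtW x + P (sqrtW x) = sqrtW y := hinj _ _ (by rw [hx', hy'])
    have hPm : P (sqrtW x) = sqrtW (y - x) := by
      rw [map_sub]
      exact eq_sub_of_add_eq' heq
    have hPv0 : P (sqrtW x) = 0 := by
      have hmem : P (sqrtW x) ∈ L ⊓ LinearMap.range ((sqrtW : H →L[ℂ] H) : H →ₗ[ℂ] H) := by
        refine Submodule.mem_inf.mpr ⟨?_, ⟨y - x, hPm.symm⟩⟩
        rw [← hPran]
        exact ⟨sqrtW x, rfl⟩
      rw [hL] at hmem
      simpa using hmem
    have hperp : sqrtW x ∈ Lᗮ := by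
      rw [Submodule.mem_orthogonal]
      intro u hu
      rw [← hPran] at hu
      obtain ⟨w, rfl⟩ := hu
      rw [ContinuousLinearMap.coe_coe, hadj P hP w (sqrtW x), hPv0, inner_zero_right]
    have hsW0 : sqrtW x = 0 := by
      have hmem : sqrtW x ∈ Lᗮ ⊓ LinearMap.range ((sqrtW : H →L[ℂ] H) : H →ₗ[ℂ] H) :=
        Submodule.mem_inf.mpr ⟨hperp, ⟨x, rfl⟩⟩
      rw [hL'] at hmem
      simpa using hmem
    have : z = 0 := by
      rw [← hx', hsW0]
      simp
    simp [this]
  · -- ran sqrtV₁ ∩ ran W = ⊥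
    rw [eq_bot_iff]
    intro z hz
    rw [Submodule.mem_inf] at hz
    obtain ⟨hz1, ⟨y, hy⟩⟩ := hz
    obtain ⟨u, hu⟩ := r3 hz1
    have hu' : sqrtW (P u) = z := by
      rw [← hu, ContinuousLinearMap.coe_coe, ContinuousLinearMap.mul_apply]
    have hy' : sqrtW (sqrtW y) = z := by
      rw [← hy, ← hsqrtW2, ContinuousLinearMap.coe_coe, ContinuousLinearMap.mul_apply]
    have heq : P u = sqrtW y := hinj _ _ (by rw [hu', hy'])
    have hPu0 : P u = 0 := by
      have hmem : P u ∈ L ⊓ LinearMap.range ((sqrtW : H →L[ℂ] H) : H →ₗ[ℂ] H) := by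
        refine Submodule.mem_inf.mpr ⟨?_, ⟨y, heq.symm⟩⟩
        rw [← hPran]
        exact ⟨u, rfl⟩
      rw [hL] at hmem
      simpa using hmem
    have : z = 0 := by rw [← hu', hPu0, map_zero]
    simp [this]
  · -- ran V₁ ⊆ ran sqrtW
    rintro z ⟨x, rfl⟩
    exact ⟨P (sqrtW x), by simp [ContinuousLinearMap.mul_apply]⟩
end
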